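/- If a box $R$ in $\mathbb{R}^2$ with integer sidelengths $l \times b$ can be tiled by translates of the boxes $R_1$ (of size $m \times 1$) and $R_2$ (of size $1 \times n$), where the corners of all tiles lie on the integer lattice, then either $m$ divides $l$ or $n$ divides $b$; consequently, either $R$ can be tiled by $R_1$ alone or $R$ can be tiled by $R_2$ alone. -/
import Mathlib


/-- The horizontal `m × 1` box with lower-left lattice cell `t`. -/
def htile (m : ℕ) (t : ℤ × ℤ) : Set (ℤ × ℤ) :=
  {p | t.1 ≤ p.1 ∧ p.1 < t.1 + m ∧ p.2 = t.2}

/-- The vertical `1 × n` box with lower-left lattice cell `t`. -/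
def vtile (n : ℕ) (t : ℤ × ℤ) : Set (ℤ × ℤ) :=
  {p | p.1 = t.1 ∧ t.2 ≤ p.2 ∧ p.2 < t.2 + n}

/-- The `l × b` box of lattice cells. -/
def rectBox (l b : ℕ) : Set (ℤ × ℤ) :=
  {p | 0 ≤ p.1 ∧ p.1 < l ∧ 0 ≤ p.2 ∧ p.2 < b}

/-- `A` is the set of lower-left corners of horizontal `m × 1` tiles and `B` the set of
lower-left corners of vertical `1 × n` tiles of a tiling of the `l × b` box: every tile is
contained in the box, and every cell of the box is covered by exactly one tile. -/
def IsTiling (m n l b : ℕ) (A B : Set (ℤ × ℤ)) : Prop :=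
  (∀ q ∈ A, htile m q ⊆ rectBox l b) ∧
  (∀ q ∈ B, vtile n q ⊆ rectBox l b) ∧
  ∀ p ∈ rectBox l b, ∃! t : (ℤ × ℤ) ⊕ (ℤ × ℤ),
    Sum.elim (fun q => q ∈ A ∧ p ∈ htile m q) (fun q => q ∈ B ∧ p ∈ vtile n q) t

open Finset Complex

lemma sum_Ico_int {M : Type*} [AddCommMonoid M] (f : ℤ → M) (a : ℤ) (k : ℕ) :
    ∑ x ∈ Finset.Ico a (a + (k : ℤ)), f x = ∑ j ∈ Finset.range k, f (a + j) := by
  induction k with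
  | zero => simp
  | succ k ih =>
    have hins : Finset.Ico a (a + ((k + 1 : ℕ) : ℤ))
        = insert (a + (k : ℤ)) (Finset.Ico a (a + (k : ℤ))) := by
      ext x
      simp only [Finset.mem_Ico, Finset.mem_insert]
      push_cast
      omega
    rw [Finset.sum_range_succ, ← ih, hins,
      Finset.sum_insert (by simp [Finset.mem_Ico]), add_comm]

/-- Partial geometric sum of a root of unity over a block of full length vanishes. -/
lemma block_sum_zero {ω : ℂ} {m : ℕ} (hω : IsPrimitiveRoot ω m) (hm : 1 < m) (a : ℤ) :
    ∑ x ∈ Finset.Ico a (a + (m : ℤ)), ω ^ x = 0 := by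
  have hne : ω ≠ 0 := by
    intro h
    have := hω.pow_eq_one
    rw [h] at this
    simp [zero_pow (by omega : m ≠ 0)] at this
  rw [sum_Ico_int (fun x => ω ^ x) a m]
  have : ∀ j ∈ Finset.range m, ω ^ (a + (j : ℤ)) = ω ^ a * ω ^ (j : ℕ) := by
    intro j _
    rw [zpow_add₀ hne, zpow_natCast]
  rw [Finset.sum_congr rfl this, ← Finset.mul_sum]
  have h1 : ω ≠ 1 := hω.ne_one hm
  rw [geom_sum_eq h1, hω.pow_eq_one]
  simp

/-- Divisibility from a vanishing geometric sum. -/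
lemma dvd_of_sum_zero {ω : ℂ} {m l : ℕ} (hω : IsPrimitiveRoot ω m) (hm : 1 < m)
    (h : ∑ x ∈ Finset.Ico (0 : ℤ) (l : ℤ), ω ^ x = 0) : m ∣ l := by
  have h1 : ω ≠ 1 := hω.ne_one hm
  have : ∑ x ∈ Finset.Ico (0 : ℤ) (0 + (l : ℤ)), ω ^ x = 0 := by rwa [zero_add]
  rw [sum_Ico_int (fun x => ω ^ x) 0 l] at this
  have h2 : ∑ j ∈ Finset.range l, ω ^ (j : ℕ) = 0 := by
    refine Eq.trans ?_ this
    refine Finset.sum_congr rfl fun j _ => ?_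
    rw [← zpow_natCast, zero_add]
  rw [geom_sum_eq h1] at h2
  rcases div_eq_zero_iff.1 h2 with h3 | h3
  · exact hω.dvd_of_pow_eq_one l (sub_eq_zero.1 h3)
  · exact absurd (sub_eq_zero.1 h3) h1

/-- The divisibility half of the theorem, via roots-of-unity weights. -/
lemma divides_of_tiling {m n l b : ℕ} (hm : 1 < m) (hn : 1 < n)
    {A B : Set (ℤ × ℤ)} (hT : IsTiling m n l b A B) : m ∣ l ∨ n ∣ b := by
  classical
  obtain ⟨hA, hB, hcov⟩ := hT
  set ω : ℂ := Complex.exp (2 * Real.pi * Complex.I / m) with hωdef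
  set ζ : ℂ := Complex.exp (2 * Real.pi * Complex.I / n) with hζdef
  have hω : IsPrimitiveRoot ω m := Complex.isPrimitiveRoot_exp m (by omega)
  have hζ : IsPrimitiveRoot ζ n := Complex.isPrimitiveRoot_exp n (by omega)
  have hωne : ω ≠ 0 := Complex.exp_ne_zero _
  have hζne : ζ ≠ 0 := Complex.exp_ne_zero _
  set F : Finset (ℤ × ℤ) := Finset.Ico (0 : ℤ) (l : ℤ) ×ˢ Finset.Ico (0 : ℤ) (b : ℤ) with hF
  have hFbox : ∀ p : ℤ × ℤ, p ∈ F ↔ p ∈ rectBox l b := by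
    intro p
    simp [hF, rectBox, Finset.mem_Ico, and_assoc]
  set w : ℤ × ℤ → ℂ := fun p => ω ^ p.1 * ζ ^ p.2 with hw
  -- the choice of tile covering p
  set g : ℤ × ℤ → (ℤ × ℤ) ⊕ (ℤ × ℤ) := fun p =>
    if h : p ∈ rectBox l b then (hcov p h).choose else Sum.inl (0, 0) with hg
  have hgspec : ∀ p (hp : p ∈ rectBox l b),
      Sum.elim (fun q => q ∈ A ∧ p ∈ htile m q) (fun q => q ∈ B ∧ p ∈ vtile n q) (g p) := by
    intro p hp
    simp only [hg, dif_pos hp]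
    exact (hcov p hp).choose_spec.1
  have hguniq : ∀ p (hp : p ∈ rectBox l b) t,
      Sum.elim (fun q => q ∈ A ∧ p ∈ htile m q) (fun q => q ∈ B ∧ p ∈ vtile n q) t → t = g p := by
    intro p hp t ht
    simp only [hg, dif_pos hp]
    exact (hcov p hp).choose_spec.2 t ht
  set A' : Finset (ℤ × ℤ) := F.filter (· ∈ A) with hA'
  set B' : Finset (ℤ × ℤ) := F.filter (· ∈ B) with hB'
  set T : Finset ((ℤ × ℤ) ⊕ (ℤ × ℤ)) := A'.image Sum.inl ∪ B'.image Sum.inr with hTdef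
  have hmaps : ∀ p ∈ F, g p ∈ T := by
    intro p hp
    have hpbox : p ∈ rectBox l b := (hFbox p).1 hp
    have := hgspec p hpbox
    rcases hgp : g p with q | q
    · rw [hgp] at this
      obtain ⟨hqA, hph⟩ := this
      have hqself : q ∈ htile m q := ⟨le_refl _, by simp [htile]; omega, rfl⟩
      have hqF : q ∈ F := (hFbox q).2 (hA q hqA hqself)
      simp only [hTdef, Finset.mem_union, Finset.mem_image]
      exact Or.inl ⟨q, Finset.mem_filter.2 ⟨hqF, hqA⟩, rfl⟩
    · rw [hgp] at this
      obtain ⟨hqB, hph⟩ := this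
      have hqself : q ∈ vtile n q := ⟨rfl, le_refl _, by simp [vtile]; omega⟩
      have hqF : q ∈ F := (hFbox q).2 (hB q hqB hqself)
      simp only [hTdef, Finset.mem_union, Finset.mem_image]
      exact Or.inr ⟨q, Finset.mem_filter.2 ⟨hqF, hqB⟩, rfl⟩
  have hfiber := Finset.sum_fiberwise_of_maps_to hmaps w
  -- each fiber sums to zero
  have hzero : ∀ t ∈ T, ∑ p ∈ F.filter (fun p => g p = t), w p = 0 := by
    intro t ht
    simp only [hTdef, Finset.mem_union, Finset.mem_image] at ht
    rcases ht with ⟨q, hq, rfl⟩ | ⟨q, hq, rfl⟩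
    · have hqA : q ∈ A := (Finset.mem_filter.1 hq).2
      have hset : F.filter (fun p => g p = Sum.inl q)
          = Finset.Ico q.1 (q.1 + (m : ℤ)) ×ˢ ({q.2} : Finset ℤ) := by
        ext p
        simp only [Finset.mem_filter, Finset.mem_product, Finset.mem_Ico, Finset.mem_singleton]
        constructor
        · rintro ⟨hpF, hgp⟩
          have := hgspec p ((hFbox p).1 hpF)
          rw [hgp] at this
          obtain ⟨_, h1, h2, h3⟩ := this
          exact ⟨⟨h1, h2⟩, h3⟩
        · rintro ⟨⟨h1, h2⟩, h3⟩
          have hph : p ∈ htile m q := ⟨h1, h2, h3⟩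
          have hpbox : p ∈ rectBox l b := hA q hqA hph
          refine ⟨(hFbox p).2 hpbox, (hguniq p hpbox (Sum.inl q) ⟨hqA, hph⟩).symm ▸ rfl⟩
      rw [hset, Finset.sum_product]
      simp only [Finset.sum_singleton, hw]
      rw [← Finset.sum_mul, block_sum_zero hω hm q.1, zero_mul]
    · have hqB : q ∈ B := (Finset.mem_filter.1 hq).2
      have hset : F.filter (fun p => g p = Sum.inr q)
          = ({q.1} : Finset ℤ) ×ˢ Finset.Ico q.2 (q.2 + (n : ℤ)) := by
        ext p
        simp only [Finset.mem_filter, Finset.mem_product, Finset.mem_Ico, Finset.mem_singleton]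
        constructor
        · rintro ⟨hpF, hgp⟩
          have := hgspec p ((hFbox p).1 hpF)
          rw [hgp] at this
          obtain ⟨_, h1, h2, h3⟩ := this
          exact ⟨h1, h2, h3⟩
        · rintro ⟨h1, h2, h3⟩
          have hph : p ∈ vtile n q := ⟨h1, h2, h3⟩
          have hpbox : p ∈ rectBox l b := hB q hqB hph
          refine ⟨(hFbox p).2 hpbox, (hguniq p hpbox (Sum.inr q) ⟨hqB, hph⟩).symm ▸ rfl⟩
      rw [hset, Finset.sum_product]
      simp only [Finset.sum_singleton, hw]
      rw [← Finset.mul_sum, block_sum_zero hζ hn q.2, mul_zero]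
  have htotal : ∑ p ∈ F, w p = 0 := by
    rw [← hfiber]
    exact Finset.sum_eq_zero hzero
  have hprod : ∑ p ∈ F, w p
      = (∑ x ∈ Finset.Ico (0 : ℤ) (l : ℤ), ω ^ x) * (∑ y ∈ Finset.Ico (0 : ℤ) (b : ℤ), ζ ^ y) := by
    rw [hF, Finset.sum_product, Finset.sum_mul]
    refine Finset.sum_congr rfl fun x _ => ?_
    rw [Finset.mul_sum]
  rw [hprod] at htotal
  rcases mul_eq_zero.1 htotal with h | h
  · exact Or.inl (dvd_of_sum_zero hω hm h)
  · exact Or.inr (dvd_of_sum_zero hζ hn h)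

lemma two_mult_eq {m a c p : ℤ} (ha : m ∣ a) (hc : m ∣ c)
    (h1 : a ≤ p) (h2 : p < a + m) (h3 : c ≤ p) (h4 : p < c + m) : a = c := by
  have := Int.eq_zero_of_abs_lt_dvd (dvd_sub ha hc) (abs_lt.2 ⟨by omega, by omega⟩)
  omega

/-- Construction of a tiling by horizontal tiles alone when `m ∣ l`. -/
lemma horiz_tiling (m n l b : ℕ) (hm : 0 < m) (hml : m ∣ l) :
    IsTiling m n l b {q : ℤ × ℤ | (m : ℤ) ∣ q.1 ∧ q ∈ rectBox l b} ∅ := by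
  have hml' : (m : ℤ) ∣ (l : ℤ) := Int.natCast_dvd_natCast.2 hml
  refine ⟨?_, by simp, ?_⟩
  · rintro q ⟨hdvd, h0, h1, h2, h3⟩ p ⟨hp1, hp2, hp3⟩
    have : q.1 + (m : ℤ) ≤ l :=
      le_of_sub_nonneg (by
        have : (m : ℤ) ≤ (l : ℤ) - q.1 := Int.le_of_dvd (by omega) (dvd_sub hml' hdvd)
        omega)
    exact ⟨by omega, by omega, by rw [hp3]; exact h2, by rw [hp3]; exact h3⟩
  · rintro p ⟨hp0, hp1, hp2, hp3⟩
    set a : ℤ := (m : ℤ) * (p.1 / m) with hadef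
    have hmz : (m : ℤ) ≠ 0 := by positivity
    have hmod := Int.emod_nonneg p.1 hmz
    have hmod2 := Int.emod_lt_of_pos p.1 (by positivity : (0:ℤ) < m)
    have hde := Int.mul_ediv_add_emod p.1 (m : ℤ)
    have ha1 : a ≤ p.1 := by omega
    have ha2 : p.1 < a + m := by omega
    have ha0 : 0 ≤ a := mul_nonneg (by positivity) (Int.ediv_nonneg hp0 (by positivity))
    have hadvd : (m : ℤ) ∣ a := Dvd.intro _ rfl
    refine ⟨Sum.inl (a, p.2), ⟨⟨hadvd, ha0, by omega, hp2, hp3⟩, ha1, ha2, rfl⟩, ?_⟩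
    rintro (q | q) ht
    · obtain ⟨⟨hqd, _, _, _, _⟩, hq1, hq2, hq3⟩ := ht
      have : q.1 = a := two_mult_eq hqd hadvd hq1 hq2 ha1 ha2
      simp only [Sum.inl.injEq]
      exact Prod.ext this hq3.symm
    · exact absurd ht.1 (Set.notMem_empty q)

/-- Construction of a tiling by vertical tiles alone when `n ∣ b`. -/
lemma vert_tiling (m n l b : ℕ) (hn : 0 < n) (hnb : n ∣ b) :
    IsTiling m n l b ∅ {q : ℤ × ℤ | (n : ℤ) ∣ q.2 ∧ q ∈ rectBox l b} := by
  have hnb' : (n : ℤ) ∣ (b : ℤ) := Int.natCast_dvd_natCast.2 hnb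
  refine ⟨by simp, ?_, ?_⟩
  · rintro q ⟨hdvd, h0, h1, h2, h3⟩ p ⟨hp1, hp2, hp3⟩
    have : q.2 + (n : ℤ) ≤ b :=
      le_of_sub_nonneg (by
        have : (n : ℤ) ≤ (b : ℤ) - q.2 := Int.le_of_dvd (by omega) (dvd_sub hnb' hdvd)
        omega)
    exact ⟨by rw [hp1]; exact h0, by rw [hp1]; exact h1, by omega, by omega⟩
  · rintro p ⟨hp0, hp1, hp2, hp3⟩
    set a : ℤ := (n : ℤ) * (p.2 / n) with hadef
    have hnz : (n : ℤ) ≠ 0 := by positivity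
    have hmod := Int.emod_nonneg p.2 hnz
    have hmod2 := Int.emod_lt_of_pos p.2 (by positivity : (0:ℤ) < n)
    have hde := Int.mul_ediv_add_emod p.2 (n : ℤ)
    have ha1 : a ≤ p.2 := by omega
    have ha2 : p.2 < a + n := by omega
    have ha0 : 0 ≤ a := mul_nonneg (by positivity) (Int.ediv_nonneg hp2 (by positivity))
    have hadvd : (n : ℤ) ∣ a := Dvd.intro _ rfl
    refine ⟨Sum.inr (p.1, a), ⟨⟨hadvd, hp0, hp1, ha0, by omega⟩, rfl, ha1, ha2⟩, ?_⟩
    rintro (q | q) ht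
    · exact absurd ht.1 (Set.notMem_empty q)
    · obtain ⟨⟨hqd, _, _, _, _⟩, hq1, hq2, hq3⟩ := ht
      have : q.2 = a := two_mult_eq hqd hadvd hq2 hq3 ha1 ha2
      simp only [Sum.inr.injEq]
      exact Prod.ext hq1.symm this
    
/-- If an `l × b` box (integer sidelengths) can be tiled by translates of the
`m × 1` box `R₁` and the `1 × n` box `R₂` (with `m, n > 1`, corners on the lattice), then
`m ∣ l` or `n ∣ b`; consequently the box can be tiled by `R₁` alone or by `R₂` alone. -/
theorem tiled_box_divisibility (m n l b : ℕ) (hm : 1 < m) (hn : 1 < n)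
    (hl : 0 < l) (hb : 0 < b)
    (htiled : ∃ A B : Set (ℤ × ℤ), IsTiling m n l b A B) :
    (m ∣ l ∨ n ∣ b) ∧
      ((∃ A : Set (ℤ × ℤ), IsTiling m n l b A ∅) ∨
        (∃ B : Set (ℤ × ℤ), IsTiling m n l b ∅ B)) := by
  obtain ⟨A, B, hT⟩ := htiled
  have hdvd := divides_of_tiling hm hn hT
  refine ⟨hdvd, ?_⟩
  rcases hdvd with h | h
  · exact Or.inl ⟨_, horiz_tiling m n l b (by omega) h⟩
  · exact Or.inr ⟨_, vert_tiling m n l b (by omega) h⟩
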